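/- Fix a mutation rate μ ∈ (0,1]. Let π = π^{μ,r} and π' = π^{μ,r'} be stationary points of RMD with interior reference profiles r and r' respectively. Then Σ_{i=1}^{2} Σ_{a∈A_i} r'_i(a) ( √(π_i(a)/π'_i(a)) − √(π'_i(a)/π_i(a)) )² ≤ Σ_{i=1}^{2} Σ_{a∈A_i} |r_i(a) − r'_i(a)| / π_i(a). -/
import Mathlib


open Finset Real

noncomputable section

/-- `p` is a point of the probability simplex over `A`. -/
def isSimplex {A : Type*} [Fintype A] (p : A → ℝ) : Prop :=
  (∀ a, 0 ≤ p a) ∧ ∑ a, p a = 1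

/-- `p` is a point of the relative interior of the probability simplex over `A`. -/
def isInterior {A : Type*} [Fintype A] (p : A → ℝ) : Prop :=
  (∀ a, 0 < p a) ∧ ∑ a, p a = 1

/-- Player 1's expected utility in the zero-sum game with payoff `u`. -/
def v1 {A1 A2 : Type*} [Fintype A1] [Fintype A2] (u : A1 → A2 → ℝ)
    (x : A1 → ℝ) (y : A2 → ℝ) : ℝ :=
  ∑ a, ∑ b, x a * y b * u a b

/-- Player 1's conditional expected utility of action `a` against `y`. -/
def q1 {A1 A2 : Type*} [Fintype A2] (u : A1 → A2 → ℝ) (y : A2 → ℝ) (a : A1) : ℝ :=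
  ∑ b, y b * u a b

/-- Player 2's conditional expected utility of action `b` against `x` (utility `-u`). -/
def q2 {A1 A2 : Type*} [Fintype A1] (u : A1 → A2 → ℝ) (x : A1 → ℝ) (b : A2) : ℝ :=
  ∑ a, x a * (- u a b)

/-- Kullback–Leibler divergence. -/
def KL {A : Type*} [Fintype A] (p q : A → ℝ) : ℝ :=
  ∑ a, p a * Real.log (p a / q a)

/-- Sum of KL divergences over the two players. -/
def KL2 {A1 A2 : Type*} [Fintype A1] [Fintype A2]
    (σ σ' : (A1 → ℝ) × (A2 → ℝ)) : ℝ :=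
  KL σ.1 σ'.1 + KL σ.2 σ'.2

/-- `σ` is a stationary point of the replicator-mutator dynamics with mutation
rate `μ` and reference profile `r`. -/
def isStationary {A1 A2 : Type*} [Fintype A1] [Fintype A2] (u : A1 → A2 → ℝ) (μ : ℝ)
    (r σ : (A1 → ℝ) × (A2 → ℝ)) : Prop :=
  isSimplex σ.1 ∧ isSimplex σ.2 ∧
  (∀ a, σ.1 a * (q1 u σ.2 a - v1 u σ.1 σ.2) + μ * (r.1 a - σ.1 a) = 0) ∧
  (∀ b, σ.2 b * (q2 u σ.1 b - (- v1 u σ.1 σ.2)) + μ * (r.2 b - σ.2 b) = 0)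

/-- One multiplicative-weights step with learning rate `η` and gain vector `g`. -/
def mwuStep {A : Type*} [Fintype A] (η : ℝ) (g p : A → ℝ) : A → ℝ :=
  fun a => p a * Real.exp (η * g a) / ∑ a', p a' * Real.exp (η * g a')

/-- Player 1's mutation gradient. -/
def qmu1 {A1 A2 : Type*} [Fintype A2] (u : A1 → A2 → ℝ) (μ : ℝ) (r1 : A1 → ℝ)
    (x : A1 → ℝ) (y : A2 → ℝ) (a : A1) : ℝ :=
  q1 u y a + μ / x a * (r1 a - x a)

/-- Player 2's mutation gradient. -/
def qmu2 {A1 A2 : Type*} [Fintype A1] (u : A1 → A2 → ℝ) (μ : ℝ) (r2 : A2 → ℝ)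
    (x : A1 → ℝ) (y : A2 → ℝ) (b : A2) : ℝ :=
  q2 u x b + μ / y b * (r2 b - y b)

/-- `σ` is a trajectory of M2WU with full feedback, learning rates `η`. -/
def isM2WU {A1 A2 : Type*} [Fintype A1] [Fintype A2] (u : A1 → A2 → ℝ) (μ : ℝ)
    (r : (A1 → ℝ) × (A2 → ℝ)) (η : ℕ → ℝ) (σ : ℕ → (A1 → ℝ) × (A2 → ℝ)) : Prop :=
  ∀ t, (σ (t+1)).1 = mwuStep (η t) (qmu1 u μ r.1 (σ t).1 (σ t).2) (σ t).1 ∧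
       (σ (t+1)).2 = mwuStep (η t) (qmu2 u μ r.2 (σ t).1 (σ t).2) (σ t).2

/-- Exploitability of a strategy profile. -/
def explt {A1 A2 : Type*} [Fintype A1] [Fintype A2] (u : A1 → A2 → ℝ)
    (σ : (A1 → ℝ) × (A2 → ℝ)) : ℝ :=
  (⨆ x : {p : A1 → ℝ // isSimplex p}, v1 u x.1 σ.2) +
  (⨆ y : {p : A2 → ℝ // isSimplex p}, - v1 u σ.1 y.1)

/-- Nash equilibrium of the two-player zero-sum game with payoff `u`. -/
def isNash {A1 A2 : Type*} [Fintype A1] [Fintype A2] (u : A1 → A2 → ℝ)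
    (σ : (A1 → ℝ) × (A2 → ℝ)) : Prop :=
  isSimplex σ.1 ∧ isSimplex σ.2 ∧
  (∀ y, isSimplex y → v1 u σ.1 σ.2 ≤ v1 u σ.1 y) ∧
  (∀ x, isSimplex x → v1 u x σ.2 ≤ v1 u σ.1 σ.2)

/-- ℓ¹ norm of a finitely supported vector. -/
def l1norm {A : Type*} [Fintype A] (p : A → ℝ) : ℝ := ∑ a, |p a|

/-- Euclidean distance between two profiles (concatenated coordinates). -/
def dist2 {A1 A2 : Type*} [Fintype A1] [Fintype A2]
    (σ σ' : (A1 → ℝ) × (A2 → ℝ)) : ℝ :=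
  Real.sqrt ((∑ a, (σ.1 a - σ'.1 a) ^ 2) + (∑ b, (σ.2 b - σ'.2 b) ^ 2))

lemma sqrt_ratio_sq {p q : ℝ} (hp : 0 < p) (hq : 0 < q) :
    (Real.sqrt (p / q) - Real.sqrt (q / p)) ^ 2 = (p - q) ^ 2 / (p * q) := by
  have h1 : Real.sqrt (p / q) * Real.sqrt (q / p) = 1 := by
    rw [← Real.sqrt_mul (by positivity), show p / q * (q / p) = 1 by field_simp]
    exact Real.sqrt_one
  have h2 : Real.sqrt (p / q) ^ 2 = p / q := Real.sq_sqrt (by positivity)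
  have h3 : Real.sqrt (q / p) ^ 2 = q / p := Real.sq_sqrt (by positivity)
  have h4 : (Real.sqrt (p/q) - Real.sqrt (q/p)) ^ 2 = p / q + q / p - 2 := by
    rw [sub_sq, h2, h3, mul_assoc, h1]; ring
  rw [h4]; field_simp; ring

lemma perturb_term_bound {p p' ρ ρ' : ℝ} (hp : 0 < p) (hp1 : p ≤ 1)
    (hp' : 0 ≤ p') (hp1' : p' ≤ 1) :
    (p - p') * (ρ - ρ') / p ≤ |ρ - ρ'| / p := by
  have h1 : |p - p'| ≤ 1 := abs_le.mpr ⟨by linarith, by linarith⟩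
  have h2 : (p - p') * (ρ - ρ') ≤ |ρ - ρ'| := by
    calc (p - p') * (ρ - ρ') ≤ |(p - p') * (ρ - ρ')| := le_abs_self _
      _ = |p - p'| * |ρ - ρ'| := abs_mul _ _
      _ ≤ 1 * |ρ - ρ'| := by
          exact mul_le_mul_of_nonneg_right h1 (abs_nonneg _)
      _ = |ρ - ρ'| := one_mul _
  exact div_le_div_of_nonneg_right h2 hp.le |>.trans_eq rfl

/-- **Key estimate comparing stationary points with different reference profiles.** -/
theorem stationary_points_reference_perturbation {A1 A2 : Type*}
    [Fintype A1] [Fintype A2]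
    (u : A1 → A2 → ℝ)
    (μ : ℝ) (hμ : 0 < μ ∧ μ ≤ 1)
    (r r' : (A1 → ℝ) × (A2 → ℝ))
    (hr1 : isInterior r.1) (hr2 : isInterior r.2)
    (hr1' : isInterior r'.1) (hr2' : isInterior r'.2)
    (σ σ' : (A1 → ℝ) × (A2 → ℝ))
    (hσ : isStationary u μ r σ) (hσ' : isStationary u μ r' σ')
    (hσ1 : isInterior σ.1) (hσ2 : isInterior σ.2)
    (hσ1' : isInterior σ'.1) (hσ2' : isInterior σ'.2) :
    (∑ a, r'.1 a * (Real.sqrt (σ.1 a / σ'.1 a) - Real.sqrt (σ'.1 a / σ.1 a)) ^ 2) +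
    (∑ b, r'.2 b * (Real.sqrt (σ.2 b / σ'.2 b) - Real.sqrt (σ'.2 b / σ.2 b)) ^ 2) ≤
    (∑ a, |r.1 a - r'.1 a| / σ.1 a) + (∑ b, |r.2 b - r'.2 b| / σ.2 b) := by
  obtain ⟨hμ0, hμ1⟩ := hμ
  obtain ⟨hs1, hs2, hst1, hst2⟩ := hσ
  obtain ⟨hs1', hs2', hst1', hst2'⟩ := hσ'
  set v : ℝ := v1 u σ.1 σ.2 with hvdef
  set v' : ℝ := v1 u σ'.1 σ'.2 with hvdef'
  -- stationarity in gradient form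
  have hq1 : ∀ a, q1 u σ.2 a - v = μ * (σ.1 a - r.1 a) / σ.1 a := by
    intro a
    have h := hst1 a
    have hx : σ.1 a ≠ 0 := (hσ1.1 a).ne'
    rw [eq_div_iff hx]
    linear_combination h
  have hq1' : ∀ a, q1 u σ'.2 a - v' = μ * (σ'.1 a - r'.1 a) / σ'.1 a := by
    intro a
    have h := hst1' a
    have hx : σ'.1 a ≠ 0 := (hσ1'.1 a).ne'
    rw [eq_div_iff hx]
    linear_combination h
  have hq2 : ∀ b, q2 u σ.1 b + v = μ * (σ.2 b - r.2 b) / σ.2 b := by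
    intro b
    have h := hst2 b
    have hy : σ.2 b ≠ 0 := (hσ2.1 b).ne'
    rw [eq_div_iff hy]
    linear_combination h
  have hq2' : ∀ b, q2 u σ'.1 b + v' = μ * (σ'.2 b - r'.2 b) / σ'.2 b := by
    intro b
    have h := hst2' b
    have hy : σ'.2 b ≠ 0 := (hσ2'.1 b).ne'
    rw [eq_div_iff hy]
    linear_combination h
  -- bilinear antisymmetry
  set T : ℝ := ∑ a, ∑ b, (σ.1 a - σ'.1 a) * ((σ.2 b - σ'.2 b) * u a b) with hT
  have hA : ∑ a, (σ.1 a - σ'.1 a) * (q1 u σ.2 a - q1 u σ'.2 a) = T := by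
    refine Finset.sum_congr rfl fun a _ => ?_
    simp only [q1, ← Finset.sum_sub_distrib, Finset.mul_sum]
    exact Finset.sum_congr rfl fun b _ => by ring
  have hB : ∑ b, (σ.2 b - σ'.2 b) * (q2 u σ.1 b - q2 u σ'.1 b) = -T := by
    have h : ∀ b ∈ (Finset.univ : Finset A2), (σ.2 b - σ'.2 b) * (q2 u σ.1 b - q2 u σ'.1 b)
        = ∑ a, -((σ.1 a - σ'.1 a) * ((σ.2 b - σ'.2 b) * u a b)) := by
      intro b _
      simp only [q2, ← Finset.sum_sub_distrib, Finset.mul_sum]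
      exact Finset.sum_congr rfl fun a _ => by ring
    rw [Finset.sum_congr rfl h, Finset.sum_comm]
    simp [hT, Finset.sum_neg_distrib]
  have hcx : ∑ a, (σ.1 a - σ'.1 a) = 0 := by
    rw [Finset.sum_sub_distrib, hσ1.2, hσ1'.2]; ring
  have hcy : ∑ b, (σ.2 b - σ'.2 b) = 0 := by
    rw [Finset.sum_sub_distrib, hσ2.2, hσ2'.2]; ring
  -- the two halves of the key identity
  have hP1 : μ * ∑ a, (σ.1 a - σ'.1 a) *
      ((σ.1 a - r.1 a) / σ.1 a - (σ'.1 a - r'.1 a) / σ'.1 a) = T := by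
    rw [Finset.mul_sum]
    have h : ∀ a ∈ (Finset.univ : Finset A1),
        μ * ((σ.1 a - σ'.1 a) * ((σ.1 a - r.1 a) / σ.1 a - (σ'.1 a - r'.1 a) / σ'.1 a))
        = (σ.1 a - σ'.1 a) * (q1 u σ.2 a - q1 u σ'.2 a)
          - (σ.1 a - σ'.1 a) * (v - v') := by
      intro a _
      linear_combination (σ.1 a - σ'.1 a) * (hq1' a) - (σ.1 a - σ'.1 a) * (hq1 a)
    rw [Finset.sum_congr rfl h, Finset.sum_sub_distrib, hA, ← Finset.sum_mul, hcx]
    ring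
  have hP2 : μ * ∑ b, (σ.2 b - σ'.2 b) *
      ((σ.2 b - r.2 b) / σ.2 b - (σ'.2 b - r'.2 b) / σ'.2 b) = -T := by
    rw [Finset.mul_sum]
    have h : ∀ b ∈ (Finset.univ : Finset A2),
        μ * ((σ.2 b - σ'.2 b) * ((σ.2 b - r.2 b) / σ.2 b - (σ'.2 b - r'.2 b) / σ'.2 b))
        = (σ.2 b - σ'.2 b) * (q2 u σ.1 b - q2 u σ'.1 b)
          + (σ.2 b - σ'.2 b) * (v - v') := by
      intro b _
      linear_combination (σ.2 b - σ'.2 b) * (hq2' b) - (σ.2 b - σ'.2 b) * (hq2 b)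
    rw [Finset.sum_congr rfl h, Finset.sum_add_distrib, hB, ← Finset.sum_mul, hcy]
    ring
  have hG : (∑ a, (σ.1 a - σ'.1 a) *
        ((σ.1 a - r.1 a) / σ.1 a - (σ'.1 a - r'.1 a) / σ'.1 a))
      + ∑ b, (σ.2 b - σ'.2 b) *
        ((σ.2 b - r.2 b) / σ.2 b - (σ'.2 b - r'.2 b) / σ'.2 b) = 0 := by
    have h : μ * ((∑ a, (σ.1 a - σ'.1 a) *
        ((σ.1 a - r.1 a) / σ.1 a - (σ'.1 a - r'.1 a) / σ'.1 a))
      + ∑ b, (σ.2 b - σ'.2 b) *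
        ((σ.2 b - r.2 b) / σ.2 b - (σ'.2 b - r'.2 b) / σ'.2 b)) = 0 := by
      rw [mul_add, hP1, hP2]; ring
    rcases mul_eq_zero.mp h with h | h
    · exact absurd h hμ0.ne'
    · exact h
  -- per-term algebra: split into the two target pieces
  have hsplit1 : ∀ a ∈ (Finset.univ : Finset A1),
      (σ.1 a - σ'.1 a) * ((σ.1 a - r.1 a) / σ.1 a - (σ'.1 a - r'.1 a) / σ'.1 a)
      = r'.1 a * ((σ.1 a - σ'.1 a) ^ 2 / (σ.1 a * σ'.1 a))
        - (σ.1 a - σ'.1 a) * (r.1 a - r'.1 a) / σ.1 a := by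
    intro a _
    have hx : σ.1 a ≠ 0 := (hσ1.1 a).ne'
    have hx' : σ'.1 a ≠ 0 := (hσ1'.1 a).ne'
    field_simp
    ring
  have hsplit2 : ∀ b ∈ (Finset.univ : Finset A2),
      (σ.2 b - σ'.2 b) * ((σ.2 b - r.2 b) / σ.2 b - (σ'.2 b - r'.2 b) / σ'.2 b)
      = r'.2 b * ((σ.2 b - σ'.2 b) ^ 2 / (σ.2 b * σ'.2 b))
        - (σ.2 b - σ'.2 b) * (r.2 b - r'.2 b) / σ.2 b := by
    intro b _
    have hy : σ.2 b ≠ 0 := (hσ2.1 b).ne'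
    have hy' : σ'.2 b ≠ 0 := (hσ2'.1 b).ne'
    field_simp
    ring
  have hKey : (∑ a, r'.1 a * ((σ.1 a - σ'.1 a) ^ 2 / (σ.1 a * σ'.1 a)))
      + (∑ b, r'.2 b * ((σ.2 b - σ'.2 b) ^ 2 / (σ.2 b * σ'.2 b)))
      = (∑ a, (σ.1 a - σ'.1 a) * (r.1 a - r'.1 a) / σ.1 a)
        + ∑ b, (σ.2 b - σ'.2 b) * (r.2 b - r'.2 b) / σ.2 b := by
    have h := hG
    rw [Finset.sum_congr rfl hsplit1, Finset.sum_congr rfl hsplit2,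
      Finset.sum_sub_distrib, Finset.sum_sub_distrib] at h
    linarith
  -- rewrite the LHS of the goal using the sqrt identity
  have hL1 : ∀ a ∈ (Finset.univ : Finset A1),
      r'.1 a * (Real.sqrt (σ.1 a / σ'.1 a) - Real.sqrt (σ'.1 a / σ.1 a)) ^ 2
      = r'.1 a * ((σ.1 a - σ'.1 a) ^ 2 / (σ.1 a * σ'.1 a)) := by
    intro a _
    rw [sqrt_ratio_sq (hσ1.1 a) (hσ1'.1 a)]
  have hL2 : ∀ b ∈ (Finset.univ : Finset A2),
      r'.2 b * (Real.sqrt (σ.2 b / σ'.2 b) - Real.sqrt (σ'.2 b / σ.2 b)) ^ 2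
      = r'.2 b * ((σ.2 b - σ'.2 b) ^ 2 / (σ.2 b * σ'.2 b)) := by
    intro b _
    rw [sqrt_ratio_sq (hσ2.1 b) (hσ2'.1 b)]
  rw [Finset.sum_congr rfl hL1, Finset.sum_congr rfl hL2, hKey]
  -- final estimate
  have hb1 : (∑ a, (σ.1 a - σ'.1 a) * (r.1 a - r'.1 a) / σ.1 a)
      ≤ ∑ a, |r.1 a - r'.1 a| / σ.1 a := by
    refine Finset.sum_le_sum fun a _ => ?_
    refine perturb_term_bound (hσ1.1 a) ?_ (hσ1'.1 a).le ?_
    · calc σ.1 a ≤ ∑ a', σ.1 a' :=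
          Finset.single_le_sum (fun i _ => (hσ1.1 i).le) (Finset.mem_univ a)
        _ = 1 := hσ1.2
    · calc σ'.1 a ≤ ∑ a', σ'.1 a' :=
          Finset.single_le_sum (fun i _ => (hσ1'.1 i).le) (Finset.mem_univ a)
        _ = 1 := hσ1'.2
  have hb2 : (∑ b, (σ.2 b - σ'.2 b) * (r.2 b - r'.2 b) / σ.2 b)
      ≤ ∑ b, |r.2 b - r'.2 b| / σ.2 b := by
    refine Finset.sum_le_sum fun b _ => ?_
    refine perturb_term_bound (hσ2.1 b) ?_ (hσ2'.1 b).le ?_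
    · calc σ.2 b ≤ ∑ b', σ.2 b' :=
          Finset.single_le_sum (fun i _ => (hσ2.1 i).le) (Finset.mem_univ b)
        _ = 1 := hσ2.2
    · calc σ'.2 b ≤ ∑ b', σ'.2 b' :=
          Finset.single_le_sum (fun i _ => (hσ2'.1 i).le) (Finset.mem_univ b)
        _ = 1 := hσ2'.2
  exact add_le_add hb1 hb2
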